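/- In the setting of Example 2.1 (X = max_l α_{l1} Z_l, Y = max_l α_{l2} Z_l, Z_l i.i.d. unit Fréchet, with c₁ = max_l α_{l1}/α_{l2}, c₂ = max_l α_{l2}/α_{l1}), for an i.i.d. sample (Xᵢ,Yᵢ) one has max_{i≤n} Xᵢ/Yᵢ → c₁ and max_{i≤n} Yᵢ/Xᵢ → c₂ almost surely, and hence qₙ → (c₁+c₂-2)/(c₁c₂-1) almost surely as n → ∞ (assuming c₁c₂ > 1). -/

import Mathlib

open MeasureTheory ProbabilityTheory Real Filter

/-- Deterministic part: a sequence bounded above by `c`, nonnegative, with values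
arbitrarily close to `c`, has running suprema tending to `c`. -/
lemma m4_tendsto_aux {r : ℕ → ℝ} {c : ℝ} (h0 : ∀ i, 0 ≤ r i) (hub : ∀ i, r i ≤ c)
    (hlb : ∀ k : ℕ, ∃ i, c - 1 / ((k : ℝ) + 1) ≤ r i) :
    Tendsto (fun n : ℕ => ⨆ i : Fin n, r i) atTop (nhds c) := by
  have hc0 : 0 ≤ c := le_trans (h0 0) (hub 0)
  have hub' : ∀ n : ℕ, (⨆ i : Fin n, r (i : ℕ)) ≤ c := by
    intro n
    cases n with
    | zero => simpa [Real.iSup_of_isEmpty] using hc0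
    | succ m => exact ciSup_le fun i => hub i
  rw [tendsto_order]
  constructor
  · intro b hb
    obtain ⟨k, hk⟩ := exists_nat_one_div_lt (sub_pos.2 hb)
    obtain ⟨i, hi⟩ := hlb k
    rw [eventually_atTop]
    refine ⟨i + 1, fun n hn => ?_⟩
    have hin : i < n := lt_of_lt_of_le (Nat.lt_succ_self i) hn
    have hle : r i ≤ ⨆ j : Fin n, r (j : ℕ) :=
      le_ciSup (f := fun j : Fin n => r (j : ℕ))
        (Set.Finite.bddAbove (Set.finite_range _)) (⟨i, hin⟩ : Fin n)
    linarith
  · intro b hb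
    exact Filter.Eventually.of_forall fun n => lt_of_le_of_lt (hub' n) hb

/-- Probabilistic part: almost surely some index `i` has ratio at least `c₁ - ε`. -/
lemma m4_prob_aux {Ω : Type*} [MeasurableSpace Ω] (μ : Measure Ω)
    [IsProbabilityMeasure μ] (L : ℕ) (hL : 0 < L) (Z : ℕ → Fin L → Ω → ℝ)
    (hZ : ∀ i l, Measurable (Z i l))
    (hindep : iIndepFun (fun p : ℕ × Fin L => Z p.1 p.2) μ)
    (hZF : ∀ i l, ∀ x : ℝ, 0 < x →
      μ {ω | Z i l ω ≤ x} = ENNReal.ofReal (exp (-1 / x)))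
    (α₁ α₂ : Fin L → ℝ) (hα₁ : ∀ l, 0 < α₁ l) (hα₂ : ∀ l, 0 < α₂ l)
    (hsum₂ : ∑ l, α₂ l = 1)
    (c₁ : ℝ) (hc₁ : c₁ = ⨆ l, α₁ l / α₂ l) (ε : ℝ) (hε : 0 < ε) :
    ∀ᵐ ω ∂μ, ∃ i, c₁ - ε ≤ (⨆ l, α₁ l * Z i l ω) / (⨆ l, α₂ l * Z i l ω) := by
  haveI hne : Nonempty (Fin L) := ⟨⟨0, hL⟩⟩
  obtain ⟨l₁, hl₁⟩ := Finite.exists_max (fun l => α₁ l / α₂ l)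
  set a := α₁ l₁ with ha
  set b := α₂ l₁ with hb
  have ha0 : 0 < a := hα₁ l₁
  have hb0 : 0 < b := hα₂ l₁
  have hcab : c₁ = a / b := by
    rw [hc₁]
    exact le_antisymm (ciSup_le hl₁)
      (le_ciSup (f := fun l => α₁ l / α₂ l)
        (Set.Finite.bddAbove (Set.finite_range _)) l₁)
  have hc₁pos : 0 < c₁ := hcab ▸ div_pos ha0 hb0
  set M : ℝ := max 1 (c₁ / (ε * b)) with hM
  have hM1 : (1 : ℝ) ≤ M := le_max_left _ _
  have hM0 : (0 : ℝ) < M := lt_of_lt_of_le one_pos hM1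
  have hMc : c₁ ≤ ε * b * M := by
    have h := le_max_right 1 (c₁ / (ε * b))
    rw [div_le_iff₀ (mul_pos hε hb0)] at h
    linarith
  set s : Fin L → Set ℝ := fun l => if l = l₁ then Set.Ioi M else Set.Iic 1 with hs
  have hsm : ∀ l, MeasurableSet (s l) := by
    intro l
    by_cases h : l = l₁ <;> simp [hs, h]
  set B : ℕ → Set Ω := fun i => ⋂ l, Z i l ⁻¹' s l with hBdef
  have hBm : ∀ i, MeasurableSet (B i) :=
    fun i => MeasurableSet.iInter fun l => (hZ i l) (hsm l)
  -- product formula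
  have key : ∀ S : Finset ℕ, μ (⋂ i ∈ S, B i) = ∏ i ∈ S, ∏ l, μ (Z i l ⁻¹' s l) := by
    intro S
    have h1 := hindep.measure_inter_preimage_eq_mul (S ×ˢ Finset.univ)
      (sets := fun p => s p.2) (fun p _ => hsm p.2)
    have h2 : (⋂ p ∈ S ×ˢ (Finset.univ : Finset (Fin L)),
        (fun p : ℕ × Fin L => Z p.1 p.2) p ⁻¹' s p.2) = ⋂ i ∈ S, B i := by
      ext ω
      simp only [Set.mem_iInter, Finset.mem_product, Finset.mem_univ, and_true,
        Set.mem_preimage, hBdef, Prod.forall]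
      tauto
    rw [h2] at h1
    rw [h1, Finset.prod_product]
  have hBi : ∀ i, μ (B i) = ∏ l, μ (Z i l ⁻¹' s l) := by
    intro i
    have h := key {i}
    simpa using h
  -- the factors do not depend on i
  have hval : ∀ i l, μ (Z i l ⁻¹' s l) =
      if l = l₁ then 1 - ENNReal.ofReal (exp (-1 / M)) else ENNReal.ofReal (exp (-1)) := by
    intro i l
    by_cases h : l = l₁
    · have e : Z i l ⁻¹' s l = {ω | Z i l ω ≤ M}ᶜ := by
        ext ω; simp [hs, h, not_le]
      have hms : MeasurableSet {ω | Z i l ω ≤ M} := measurableSet_le (hZ i l) measurable_const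
      rw [e, prob_compl_eq_one_sub hms, hZF i l M hM0, if_pos h]
    · have e : Z i l ⁻¹' s l = {ω | Z i l ω ≤ 1} := by
        ext ω; simp [hs, h]
      rw [e, hZF i l 1 one_pos, if_neg h]
      norm_num
  have hp : ∀ i, μ (B i) = μ (B 0) := by
    intro i
    rw [hBi, hBi]
    exact Finset.prod_congr rfl fun l _ => by rw [hval i l, hval 0 l]
  have hp0 : μ (B 0) ≠ 0 := by
    rw [hBi, Finset.prod_ne_zero_iff]
    intro l _
    rw [hval]
    split
    · have hlt : ENNReal.ofReal (exp (-1 / M)) < 1 := by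
        rw [ENNReal.ofReal_lt_one, Real.exp_lt_one_iff]
        exact div_neg_of_neg_of_pos (by norm_num) hM0
      exact (tsub_pos_iff_lt.2 hlt).ne'
    · exact (ENNReal.ofReal_pos.2 (Real.exp_pos _)).ne'
  have htop : ∑' i, μ (B i) = ⊤ := by
    calc ∑' i : ℕ, μ (B i) = ∑' _ : ℕ, μ (B 0) := tsum_congr hp
    _ = ⊤ := ENNReal.tsum_const_eq_top_of_ne_zero hp0
  -- independence of the events B i
  have hind : iIndepSet B μ := by
    rw [iIndepSet_iff_iIndep]
    refine iIndepSets.iIndep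
      (fun i => MeasurableSpace.generateFrom_le ?_) (fun i => {B i})
      (fun i => IsPiSystem.singleton _) (fun i => rfl) ?_
    · rintro t ht
      rw [Set.mem_singleton_iff] at ht
      exact ht ▸ hBm i
    · rw [iIndepSets_iff]
      intro S f hf
      have hfB : ∀ i ∈ S, f i = B i := fun i hi => Set.mem_singleton_iff.mp (hf i hi)
      have e : (⋂ i ∈ S, f i) = ⋂ i ∈ S, B i :=
        Set.iInter₂_congr fun i hi => hfB i hi
      rw [e, key S]
      exact Finset.prod_congr rfl fun i hi => by rw [hfB i hi, hBi]
  have hone : μ (limsup B atTop) = 1 := measure_limsup_eq_one hBm hind htop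
  have haemem : ∀ᵐ ω ∂μ, ω ∈ limsup B atTop := by
    have huniv : (limsup B atTop : Set Ω) =ᵐ[μ] Set.univ :=
      (ae_eq_univ_iff_measure_eq (MeasurableSet.measurableSet_limsup hBm).nullMeasurableSet).2
        (by rw [hone, measure_univ])
    have h0 : μ (limsup B atTop)ᶜ = 0 := MeasureTheory.ae_eq_univ.mp huniv
    rw [ae_iff]
    exact h0
  filter_upwards [haemem] with ω hω
  rw [mem_limsup_iff_frequently_mem] at hω
  obtain ⟨i, hi⟩ := hω.exists
  refine ⟨i, ?_⟩
  simp only [hBdef, Set.mem_iInter, Set.mem_preimage] at hi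
  have ht1 : M < Z i l₁ ω := by
    have h := hi l₁
    simpa [hs] using h
  have hle1 : ∀ l, l ≠ l₁ → Z i l ω ≤ 1 := by
    intro l h
    have h2 := hi l
    simpa [hs, h] using h2
  set t := Z i l₁ ω with htdef
  have ht0 : 0 < t := lt_trans hM0 ht1
  have hXge : a * t ≤ ⨆ l, α₁ l * Z i l ω :=
    le_ciSup (f := fun l => α₁ l * Z i l ω) (Set.Finite.bddAbove (Set.finite_range _)) l₁
  have hYge : b * t ≤ ⨆ l, α₂ l * Z i l ω :=
    le_ciSup (f := fun l => α₂ l * Z i l ω) (Set.Finite.bddAbove (Set.finite_range _)) l₁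
  have hY0 : 0 < ⨆ l, α₂ l * Z i l ω := lt_of_lt_of_le (mul_pos hb0 ht0) hYge
  have hYle : (⨆ l, α₂ l * Z i l ω) ≤ b * t + 1 := by
    refine ciSup_le fun l => ?_
    by_cases h : l = l₁
    · subst h; nlinarith
    · have h2 : α₂ l ≤ 1 := by
        calc α₂ l ≤ ∑ l', α₂ l' :=
          Finset.single_le_sum (fun l' _ => (hα₂ l').le) (Finset.mem_univ l)
        _ = 1 := hsum₂
      have h3 := hle1 l h
      nlinarith [mul_pos hb0 ht0, hα₂ l]
  have step1 : (a * t) / (b * t + 1) ≤ (⨆ l, α₁ l * Z i l ω) / (⨆ l, α₂ l * Z i l ω) := by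
    refine div_le_div₀ (le_trans (by positivity) hXge) hXge hY0 hYle
  have step2 : c₁ - ε ≤ (a * t) / (b * t + 1) := by
    rw [le_div_iff₀ (by positivity)]
    have hab : a = c₁ * b := by rw [hcab]; field_simp
    nlinarith [mul_pos (mul_pos hε hb0) (sub_pos.2 ht1)]
  linarith

/-- Example 2.1: for `Xᵢ = max_l α_{l1} Z_{l,i}`, `Yᵢ = max_l α_{l2} Z_{l,i}` built from
i.i.d. unit Fréchet `Z_{l,i}`, with `c₁ = max_l α_{l1}/α_{l2}`, `c₂ = max_l α_{l2}/α_{l1}`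
and `c₁c₂ > 1`, one has `max_{i≤n} Xᵢ/Yᵢ → c₁`, `max_{i≤n} Yᵢ/Xᵢ → c₂` a.s., and hence
`qₙ → (c₁+c₂-2)/(c₁c₂-1)` almost surely. -/
theorem m4_quotient_correlation_limit {Ω : Type*} [MeasurableSpace Ω] (μ : Measure Ω)
    [IsProbabilityMeasure μ] (L : ℕ) (hL : 0 < L) (Z : ℕ → Fin L → Ω → ℝ)
    (hZ : ∀ i l, Measurable (Z i l))
    (hindep : iIndepFun (fun p : ℕ × Fin L => Z p.1 p.2) μ)
    (hZpos : ∀ i l, ∀ᵐ ω ∂μ, 0 < Z i l ω)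
    (hZF : ∀ i l, ∀ x : ℝ, 0 < x →
      μ {ω | Z i l ω ≤ x} = ENNReal.ofReal (exp (-1 / x)))
    (α₁ α₂ : Fin L → ℝ) (hα₁ : ∀ l, 0 < α₁ l) (hα₂ : ∀ l, 0 < α₂ l)
    (hsum₁ : ∑ l, α₁ l = 1) (hsum₂ : ∑ l, α₂ l = 1)
    (X Y : ℕ → Ω → ℝ)
    (hXdef : ∀ i ω, X i ω = ⨆ l, α₁ l * Z i l ω)
    (hYdef : ∀ i ω, Y i ω = ⨆ l, α₂ l * Z i l ω)
    (c₁ c₂ : ℝ) (hc₁ : c₁ = ⨆ l, α₁ l / α₂ l) (hc₂ : c₂ = ⨆ l, α₂ l / α₁ l)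
    (hcc : 1 < c₁ * c₂) :
    ∀ᵐ ω ∂μ,
      Tendsto (fun n : ℕ => ⨆ i : Fin n, X i ω / Y i ω) atTop (nhds c₁) ∧
      Tendsto (fun n : ℕ => ⨆ i : Fin n, Y i ω / X i ω) atTop (nhds c₂) ∧
      Tendsto (fun n : ℕ =>
          ((⨆ i : Fin n, Y i ω / X i ω) + (⨆ i : Fin n, X i ω / Y i ω) - 2) /
          ((⨆ i : Fin n, Y i ω / X i ω) * (⨆ i : Fin n, X i ω / Y i ω) - 1))
        atTop (nhds ((c₁ + c₂ - 2) / (c₁ * c₂ - 1))) := by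
  haveI hne : Nonempty (Fin L) := ⟨⟨0, hL⟩⟩
  have hc₁pos : 0 < c₁ := by
    rw [hc₁]
    exact lt_of_lt_of_le (div_pos (hα₁ (Classical.arbitrary _)) (hα₂ (Classical.arbitrary _)))
      (le_ciSup (f := fun l => α₁ l / α₂ l)
        (Set.Finite.bddAbove (Set.finite_range _)) (Classical.arbitrary _))
  have hc₂pos : 0 < c₂ := by
    rw [hc₂]
    exact lt_of_lt_of_le (div_pos (hα₂ (Classical.arbitrary _)) (hα₁ (Classical.arbitrary _)))
      (le_ciSup (f := fun l => α₂ l / α₁ l)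
        (Set.Finite.bddAbove (Set.finite_range _)) (Classical.arbitrary _))
  have haux₁ : ∀ᵐ ω ∂μ, ∀ k : ℕ, ∃ i,
      c₁ - 1 / ((k : ℝ) + 1) ≤ (⨆ l, α₁ l * Z i l ω) / (⨆ l, α₂ l * Z i l ω) :=
    ae_all_iff.2 fun k => m4_prob_aux μ L hL Z hZ hindep hZF α₁ α₂ hα₁ hα₂ hsum₂ c₁ hc₁
      (1 / ((k : ℝ) + 1)) (by positivity)
  have haux₂ : ∀ᵐ ω ∂μ, ∀ k : ℕ, ∃ i,
      c₂ - 1 / ((k : ℝ) + 1) ≤ (⨆ l, α₂ l * Z i l ω) / (⨆ l, α₁ l * Z i l ω) :=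
    ae_all_iff.2 fun k => m4_prob_aux μ L hL Z hZ hindep hZF α₂ α₁ hα₂ hα₁ hsum₁ c₂ hc₂
      (1 / ((k : ℝ) + 1)) (by positivity)
  have hpos : ∀ᵐ ω ∂μ, ∀ i l, 0 < Z i l ω :=
    ae_all_iff.2 fun i => ae_all_iff.2 fun l => hZpos i l
  filter_upwards [hpos, haux₁, haux₂] with ω hZp h1 h2
  -- positivity of X and Y
  have hX0 : ∀ i, 0 < X i ω := by
    intro i
    rw [hXdef]
    exact lt_of_lt_of_le (mul_pos (hα₁ (Classical.arbitrary _)) (hZp i _))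
      (le_ciSup (f := fun l => α₁ l * Z i l ω)
        (Set.Finite.bddAbove (Set.finite_range _)) (Classical.arbitrary _))
  have hY0 : ∀ i, 0 < Y i ω := by
    intro i
    rw [hYdef]
    exact lt_of_lt_of_le (mul_pos (hα₂ (Classical.arbitrary _)) (hZp i _))
      (le_ciSup (f := fun l => α₂ l * Z i l ω)
        (Set.Finite.bddAbove (Set.finite_range _)) (Classical.arbitrary _))
  -- upper bounds
  have hXle : ∀ i, X i ω / Y i ω ≤ c₁ := by
    intro i
    rw [div_le_iff₀ (hY0 i), hXdef, hYdef]
    refine ciSup_le fun l => ?_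
    have hr : α₁ l / α₂ l ≤ c₁ :=
      hc₁ ▸ le_ciSup (f := fun l => α₁ l / α₂ l) (Set.Finite.bddAbove (Set.finite_range _)) l
    have hr' : α₁ l ≤ c₁ * α₂ l := (div_le_iff₀ (hα₂ l)).1 hr
    have hmem : α₂ l * Z i l ω ≤ ⨆ l', α₂ l' * Z i l' ω :=
      le_ciSup (f := fun l' => α₂ l' * Z i l' ω) (Set.Finite.bddAbove (Set.finite_range _)) l
    nlinarith [(hZp i l).le, mul_le_mul_of_nonneg_left hmem hc₁pos.le,
      mul_le_mul_of_nonneg_right hr' (hZp i l).le]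
  have hYle : ∀ i, Y i ω / X i ω ≤ c₂ := by
    intro i
    rw [div_le_iff₀ (hX0 i), hYdef, hXdef]
    refine ciSup_le fun l => ?_
    have hr : α₂ l / α₁ l ≤ c₂ :=
      hc₂ ▸ le_ciSup (f := fun l => α₂ l / α₁ l) (Set.Finite.bddAbove (Set.finite_range _)) l
    have hr' : α₂ l ≤ c₂ * α₁ l := (div_le_iff₀ (hα₁ l)).1 hr
    have hmem : α₁ l * Z i l ω ≤ ⨆ l', α₁ l' * Z i l' ω :=
      le_ciSup (f := fun l' => α₁ l' * Z i l' ω) (Set.Finite.bddAbove (Set.finite_range _)) l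
    nlinarith [(hZp i l).le, mul_le_mul_of_nonneg_left hmem hc₂pos.le,
      mul_le_mul_of_nonneg_right hr' (hZp i l).le]
  have T1 : Tendsto (fun n : ℕ => ⨆ i : Fin n, X i ω / Y i ω) atTop (nhds c₁) := by
    refine m4_tendsto_aux (fun i => (div_pos (hX0 i) (hY0 i)).le) hXle fun k => ?_
    obtain ⟨i, hi⟩ := h1 k
    exact ⟨i, by rw [hXdef, hYdef]; exact hi⟩
  have T2 : Tendsto (fun n : ℕ => ⨆ i : Fin n, Y i ω / X i ω) atTop (nhds c₂) := by
    refine m4_tendsto_aux (fun i => (div_pos (hY0 i) (hX0 i)).le) hYle fun k => ?_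
    obtain ⟨i, hi⟩ := h2 k
    exact ⟨i, by rw [hXdef, hYdef]; exact hi⟩
  refine ⟨T1, T2, ?_⟩
  have hden : c₂ * c₁ - 1 ≠ 0 := by
    have : (1 : ℝ) < c₂ * c₁ := by nlinarith
    exact sub_ne_zero.2 this.ne'
  have hT3 := (((T2.add T1).sub (tendsto_const_nhds (x := (2:ℝ)))).div
    ((T2.mul T1).sub (tendsto_const_nhds (x := (1:ℝ)))) hden)
  have e : (c₁ + c₂ - 2) / (c₁ * c₂ - 1) = (c₂ + c₁ - 2) / (c₂ * c₁ - 1) := by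
    rw [add_comm c₁ c₂, mul_comm c₁ c₂]
  rw [e]
  exact hT3
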